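/- arXiv:1311.2986 — 10 statements merged into one kernel-verified Lean document; each statement's English description precedes it below -/
import Mathlib

section
/- Let (X, τ) be a non-compact, locally compact Hausdorff topological space. Then the second de Groot dual of τ equals τ, i.e. τ = τ^{GG}. -/
open Topology Filter Set

/-- A set is saturated if it is an intersection of open sets. -/
def IsSaturatedSet {X : Type*} (t : TopologicalSpace X) (s : Set X) : Prop :=
  ∃ F : Set (Set X), (∀ u ∈ F, t.IsOpen u) ∧ s = ⋂₀ F

/-- The de Groot dual (co-compact) topology: the topology whose closed sets are
generated by the family of all compact saturated sets used as a base for closed sets. -/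
def deGrootDual {X : Type*} (t : TopologicalSpace X) : TopologicalSpace X :=
  TopologicalSpace.generateFrom
    {v : Set X | ∃ k : Set X, @IsCompact X t k ∧ IsSaturatedSet t k ∧ v = kᶜ}

/-- If all co-singletons are open, every set is saturated. -/
lemma isSaturatedSet_of_t1 {X : Type*} (t : TopologicalSpace X)
    (h : ∀ y : X, t.IsOpen {y}ᶜ) (s : Set X) : IsSaturatedSet t s := by
  refine ⟨(fun y => ({y}ᶜ : Set X)) '' sᶜ, ?_, ?_⟩
  · rintro u ⟨y, -, rfl⟩; exact h y
  · ext x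
    simp only [Set.mem_sInter, Set.mem_image, Set.mem_compl_iff, Set.mem_singleton_iff]
    constructor
    · intro hx
      rintro u ⟨y, hy, rfl⟩
      simp only [Set.mem_compl_iff, Set.mem_singleton_iff]
      rintro rfl; exact hy hx
    · intro hx
      by_contra hxs
      have := hx _ ⟨x, hxs, rfl⟩
      simp at this

lemma deGrootDual_dual_eq_aux {X : Type*} [t : TopologicalSpace X]
    [T2Space X] [LocallyCompactSpace X] :
    t = deGrootDual (deGrootDual t) := by
  classical
  -- co-singletons are t-open
  have ht1 : ∀ y : X, t.IsOpen {y}ᶜ := fun y => (isClosed_singleton (x := y)).isOpen_compl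
  -- every basic generator of the dual is t-open
  have hgen : ∀ v ∈ {v : Set X | ∃ k : Set X, IsCompact k ∧ IsSaturatedSet t k ∧ v = kᶜ},
      IsOpen v := by
    rintro v ⟨k, hk, -, rfl⟩
    exact hk.isClosed.isOpen_compl
  have hle : t ≤ deGrootDual t := le_generateFrom hgen
  have hdual_open : ∀ U : Set X, IsOpen[deGrootDual t] U → IsOpen U := fun U hU => hle U hU
  -- structure: every dual-open set is empty or has compact complement
  have hstruct : ∀ U : Set X, IsOpen[deGrootDual t] U → U = ∅ ∨ IsCompact Uᶜ := by
    intro U hU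
    induction hU with
    | basic v hv =>
      obtain ⟨k, hk, -, rfl⟩ := hv
      right; rwa [compl_compl]
    | univ => right; simp
    | inter U V hU hV ihU ihV =>
      rcases ihU with rfl | hU'
      · left; simp
      rcases ihV with rfl | hV'
      · left; simp
      · right; rw [Set.compl_inter]; exact hU'.union hV'
    | sUnion S hS ih =>
      by_cases hall : ∀ u ∈ S, u = ∅
      · left
        simp only [Set.sUnion_eq_empty]
        exact hall
      · push_neg at hall
        obtain ⟨u₀, hu₀S, hu₀⟩ := hall
        have hu₀c : IsCompact u₀ᶜ := (ih u₀ hu₀S).resolve_left hu₀.ne_empty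
        right
        rw [Set.compl_sUnion]
        have hclosed : IsClosed (⋂₀ (compl '' S)) := by
          refine isClosed_sInter ?_
          rintro v ⟨u, huS, rfl⟩
          rcases ih u huS with rfl | hc
          · simp
          · exact hc.isClosed
        exact hu₀c.of_isClosed_subset hclosed
          (Set.sInter_subset_of_mem ⟨u₀, hu₀S, rfl⟩)
  -- co-singletons are dual-open
  have ht1G : ∀ y : X, IsOpen[deGrootDual t] {y}ᶜ := by
    intro y
    exact TopologicalSpace.GenerateOpen.basic _
      ⟨{y}, isCompact_singleton, isSaturatedSet_of_t1 t ht1 _, rfl⟩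
  -- t-closed sets are dual-compact
  have hcompG : ∀ s : Set X, IsClosed s → @IsCompact X (deGrootDual t) s := by
    intro s hs
    refine @isCompact_of_finite_subcover X (deGrootDual t) s ?_
    intro ι U hUopen hcover
    rcases Set.eq_empty_or_nonempty s with rfl | ⟨x, hx⟩
    · exact ⟨∅, by simp⟩
    · obtain ⟨i₀, hi₀⟩ := Set.mem_iUnion.mp (hcover hx)
      have hne : U i₀ ≠ ∅ := fun h => by simp [h] at hi₀
      have hK : IsCompact (U i₀)ᶜ := (hstruct _ (hUopen i₀)).resolve_left hne
      have hsK : IsCompact (s ∩ (U i₀)ᶜ) := hK.inter_left hs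
      obtain ⟨F, hF⟩ := hsK.elim_finite_subcover U (fun i => hdual_open _ (hUopen i))
        (fun z hz => hcover hz.1)
      refine ⟨insert i₀ F, fun z hz => ?_⟩
      by_cases hzU : z ∈ U i₀
      · exact Set.mem_iUnion₂.mpr ⟨i₀, Finset.mem_insert_self _ _, hzU⟩
      · obtain ⟨i, hiF, hzi⟩ := Set.mem_iUnion₂.mp (hF ⟨hz, hzU⟩)
        exact Set.mem_iUnion₂.mpr ⟨i, Finset.mem_insert_of_mem hiF, hzi⟩
  -- dual-compact sets are t-closed
  have hclosedG : ∀ s : Set X, @IsCompact X (deGrootDual t) s → IsClosed s := by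
    intro s hs
    refine isClosed_of_closure_subset ?_
    intro x hx
    have hne : (𝓝 x ⊓ 𝓟 s).NeBot := mem_closure_iff_clusterPt.mp hx
    have hfs : 𝓝 x ⊓ 𝓟 s ≤ 𝓟 s := inf_le_right
    obtain ⟨a, has, hcl⟩ := hs hfs
    by_cases hax : a = x
    · rwa [hax] at has
    · exfalso
      obtain ⟨u, v, hu, hv, hxu, hav, huv⟩ := t2_separation (Ne.symm hax)
      obtain ⟨k, hkx, hku, hkc⟩ := local_compact_nhds (hu.mem_nhds hxu)
      have hak : a ∉ k := fun hak => Set.disjoint_left.mp huv (hku hak) hav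
      have hkG : IsOpen[deGrootDual t] kᶜ := TopologicalSpace.GenerateOpen.basic _
        ⟨k, hkc, isSaturatedSet_of_t1 t ht1 _, rfl⟩
      have h1 : kᶜ ∈ @nhds X (deGrootDual t) a := @IsOpen.mem_nhds X (deGrootDual t) a kᶜ hkG hak
      have h2' : k ∈ 𝓝 x ⊓ 𝓟 s := Filter.mem_inf_of_left hkx
      have hbot : (kᶜ ∩ k : Set X) ∈ @nhds X (deGrootDual t) a ⊓ (𝓝 x ⊓ 𝓟 s) :=
        Filter.inter_mem (Filter.mem_inf_of_left h1) (Filter.mem_inf_of_right h2')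
      rw [Set.compl_inter_self] at hbot
      exact hcl.ne' (Filter.empty_mem_iff_bot.mp hbot)
  -- conclude
  have hset : {v : Set X | ∃ k : Set X, @IsCompact X (deGrootDual t) k ∧
      IsSaturatedSet (deGrootDual t) k ∧ v = kᶜ} = {v : Set X | IsOpen v} := by
    ext v
    constructor
    · rintro ⟨k, hk, -, rfl⟩
      exact (hclosedG k hk).isOpen_compl
    · intro hv
      exact ⟨vᶜ, hcompG _ (isClosed_compl_iff.mpr hv),
        isSaturatedSet_of_t1 (deGrootDual t) ht1G _, (compl_compl v).symm⟩
  conv_rhs => rw [deGrootDual, hset]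
  exact (TopologicalSpace.generateFrom_setOf_isOpen t).symm

/-- For a non-compact, locally compact Hausdorff space, the second de Groot dual
of the topology equals the topology itself: `τ = τ^{GG}`. -/
theorem deGrootDual_dual_eq {X : Type*} (t : TopologicalSpace X)
    (h2 : @T2Space X t) (hlc : @LocallyCompactSpace X t) (hnc : ¬ @CompactSpace X t) :
    t = deGrootDual (deGrootDual t) := by
  letI := t
  exact deGrootDual_dual_eq_aux
end

section
/- Let (X, τ) be a non-compact, locally compact Hausdorff topological space. Then the space (X, τ^G) equipped with the de Groot dual topology is compact and superconnected, i.e. any two nonempty τ^G-open sets have nonempty intersection. -/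
/-- For a non-compact, locally compact Hausdorff space `(X, τ)`, the space equipped with
the de Groot dual topology `τ^G` is compact and superconnected (any two nonempty
`τ^G`-open sets meet). -/
theorem deGrootDual_compact_superconnected {X : Type*} (t : TopologicalSpace X)
    (h2 : @T2Space X t) (hlc : @LocallyCompactSpace X t) (hnc : ¬ @CompactSpace X t) :
    @CompactSpace X (deGrootDual t) ∧
    ∀ u v : Set X, (deGrootDual t).IsOpen u → (deGrootDual t).IsOpen v →
      u.Nonempty → v.Nonempty → (u ∩ v).Nonempty := by
  classical
  letI := t
  haveI := h2
  haveI := hlc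
  -- every deGroot-dual open set is τ-open
  have hle : t ≤ deGrootDual t := by
    apply le_generateFrom
    rintro v ⟨k, hk, -, rfl⟩
    exact hk.isClosed.isOpen_compl
  -- basic neighborhoods in the dual topology
  have hbase : ∀ u : Set X, (deGrootDual t).IsOpen u → ∀ x ∈ u,
      ∃ k : Set X, IsCompact k ∧ x ∉ k ∧ kᶜ ⊆ u := by
    intro u hu x hx
    have hb := @TopologicalSpace.isTopologicalBasis_of_subbasis X (deGrootDual t)
      {v : Set X | ∃ k : Set X, IsCompact k ∧ IsSaturatedSet t k ∧ v = kᶜ} rfl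
    obtain ⟨w, ⟨f, ⟨hff, hfs⟩, rfl⟩, hxw, hwu⟩ :=
      @TopologicalSpace.IsTopologicalBasis.exists_subset_of_mem_open X (deGrootDual t)
        _ hb x u hx hu
    refine ⟨(⋂₀ f)ᶜ, ?_, by simpa using hxw, by simpa using hwu⟩
    have : (⋂₀ f)ᶜ = ⋃ v ∈ f, vᶜ := by
      simp [Set.compl_sInter, Set.sUnion_image]
    rw [this]
    apply hff.isCompact_biUnion
    intro v hv
    obtain ⟨k, hk, -, rfl⟩ := hfs hv
    simpa using hk
  constructor
  · refine @CompactSpace.mk X (deGrootDual t) ?_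
    refine @isCompact_of_finite_subcover X (deGrootDual t) Set.univ ?_
    intro ι U hU hcov
    have hne : Nonempty X := by
      by_contra h
      haveI := not_nonempty_iff.mp h
      exact hnc inferInstance
    obtain ⟨x₀⟩ := hne
    obtain ⟨i₀, hi₀⟩ := Set.mem_iUnion.mp (hcov (Set.mem_univ x₀))
    obtain ⟨k, hk, -, hku⟩ := hbase (U i₀) (hU i₀) x₀ hi₀
    -- cover k by τ-open sets U i
    have hUopen : ∀ i, t.IsOpen (U i) := fun i => hle _ (hU i)
    obtain ⟨F, hF⟩ := hk.elim_finite_subcover U hUopen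
      (fun y _ => hcov (Set.mem_univ y))
    refine ⟨insert i₀ F, fun z _ => ?_⟩
    by_cases hz : z ∈ k
    · obtain ⟨i, hiF, hzi⟩ := Set.mem_iUnion₂.mp (hF hz)
      exact Set.mem_iUnion₂.mpr ⟨i, Finset.mem_insert_of_mem hiF, hzi⟩
    · exact Set.mem_iUnion₂.mpr ⟨i₀, Finset.mem_insert_self _ _, hku hz⟩
  · rintro u v hu hv ⟨x, hx⟩ ⟨y, hy⟩
    obtain ⟨k₁, hk₁, -, hk₁u⟩ := hbase u hu x hx
    obtain ⟨k₂, hk₂, -, hk₂v⟩ := hbase v hv y hy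
    have hne : (k₁ ∪ k₂)ᶜ.Nonempty := by
      rw [Set.nonempty_compl]
      intro h
      have hc : IsCompact (Set.univ : Set X) := h ▸ hk₁.union hk₂
      exact hnc ⟨hc⟩
    obtain ⟨z, hz⟩ := hne
    rw [Set.compl_union] at hz
    exact ⟨z, hk₁u hz.1, hk₂v hz.2⟩
end

section
/- Let (X, τ) be a non-compact, locally compact Hausdorff topological space. Then for every τ-compact subset K ⊆ X, the subspace topologies induced on K by τ and by the de Groot dual topology τ^G coincide. -/
lemma isSaturated_of_t1 {X : Type*} (t : TopologicalSpace X) (h1 : @T1Space X t)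
    (s : Set X) : IsSaturatedSet t s := by
  refine ⟨{u | ∃ x ∉ s, u = {x}ᶜ}, ?_, ?_⟩
  · rintro u ⟨x, -, rfl⟩
    exact @isOpen_compl_singleton X t h1 x
  · ext y
    simp only [Set.mem_sInter, Set.mem_setOf_eq]
    constructor
    · rintro hy u ⟨x, hx, rfl⟩
      simp only [Set.mem_compl_iff, Set.mem_singleton_iff]
      rintro rfl; exact hx hy
    · intro h
      by_contra hy
      have := h {y}ᶜ ⟨y, hy, rfl⟩
      simp at this

lemma isOpen_induced_iff' {X Y : Type*} (f : Y → X) (τ : TopologicalSpace X) (s : Set Y) :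
    (TopologicalSpace.induced f τ).IsOpen s ↔ ∃ U, τ.IsOpen U ∧ f ⁻¹' U = s := Iff.rfl

/-- For a non-compact, locally compact Hausdorff space `(X, τ)`, the subspace topologies
induced on any `τ`-compact subset `K ⊆ X` by `τ` and by the de Groot dual `τ^G` coincide. -/
theorem deGrootDual_induced_eq_on_compact {X : Type*} (t : TopologicalSpace X)
    (h2 : @T2Space X t) (hlc : @LocallyCompactSpace X t) (hnc : ¬ @CompactSpace X t) :
    ∀ K : Set X, @IsCompact X t K →
      TopologicalSpace.induced ((↑) : K → X) (deGrootDual t) =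
        TopologicalSpace.induced ((↑) : K → X) t := by
  letI := t
  intro K hK
  refine le_antisymm ?_ ?_
  · -- every `t`-induced-open is `deGrootDual`-induced-open
    intro s hs
    obtain ⟨U, hU, rfl⟩ := (isOpen_induced_iff' _ _ _).mp hs
    refine (isOpen_induced_iff' _ _ _).mpr ?_
    obtain ⟨M, hM, hKM⟩ := exists_compact_superset hK
    have hKM' : K ⊆ M := hKM.trans interior_subset
    have hU' : IsOpen U := hU
    refine ⟨(M ∩ Uᶜ)ᶜ, ?_, ?_⟩
    · exact TopologicalSpace.GenerateOpen.basic _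
        ⟨M ∩ Uᶜ, hM.inter_right hU'.isClosed_compl, isSaturated_of_t1 t inferInstance _, rfl⟩
    · ext ⟨x, hx⟩
      simp only [Set.mem_preimage, Set.mem_compl_iff, Set.mem_inter_iff, not_and, not_not]
      exact ⟨fun h => h (hKM' hx), fun h _ => h⟩
  · -- `t` is finer than `deGrootDual t`
    refine induced_mono (le_generateFrom ?_)
    rintro v ⟨k, hk, -, rfl⟩
    exact hk.isClosed.isOpen_compl
end

section
/- Let S be a set, ⊥ ∈ S, and ≺ a binary relation on S whose restriction to S ∖ {⊥} is irreflexive and transitive. Suppose there exists a finite set M ⊆ S ∖ {⊥} such that for every x ∈ S there exists m ∈ M with x ≺ m or m ≺ x. Then there is no binary relation ⊑ on S such that (S, ⊑, ≺) is a causal site with least element ⊥. -/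
/-- A causal site of Christensen and Crane: a set `S` of regions with an inclusion
partial order `incl` (with binary suprema `sup` and least element `bot`) and a causal
relation `caus` whose restriction to `S ∖ {bot}` is a strict partial order,
satisfying the four linking axioms. -/
structure CausalSite (S : Type*) where
  incl : S → S → Prop
  caus : S → S → Prop
  sup : S → S → S
  bot : S
  incl_refl : ∀ a, incl a a
  incl_antisymm : ∀ a b, incl a b → incl b a → a = b
  incl_trans : ∀ a b c, incl a b → incl b c → incl a c
  bot_incl : ∀ a, incl bot a
  incl_sup_left : ∀ a b, incl a (sup a b)
  incl_sup_right : ∀ a b, incl b (sup a b)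
  sup_incl : ∀ a b c, incl a c → incl b c → incl (sup a b) c
  caus_irrefl : ∀ a, a ≠ bot → ¬ caus a a
  caus_trans : ∀ a b c, a ≠ bot → b ≠ bot → c ≠ bot →
    caus a b → caus b c → caus a c
  ax_i : ∀ a b c, incl b a → caus a c → caus b c
  ax_ii : ∀ a b c, incl b a → caus c a → caus c b
  ax_iii : ∀ a b c, caus a c → caus b c → caus (sup a b) c
  ax_iv : ∀ a b, ∃ ba, caus ba a ∧ incl ba b ∧
    ∀ c, caus c a → incl c b → incl c ba

/-- Let `S` be a set with a distinguished element `⊥` and a relation `≺` whose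
restriction to `S ∖ {⊥}` is irreflexive and transitive. If there is a finite set
`M ⊆ S ∖ {⊥}` such that every `x ∈ S` satisfies `x ≺ m` or `m ≺ x` for some `m ∈ M`,
then there is no inclusion relation making `(S, ⊑, ≺)` a causal site with least
element `⊥`. -/
theorem no_causalSite_of_finite_comparability_core {S : Type*} (bot : S)
    (caus : S → S → Prop)
    (hirr : ∀ a, a ≠ bot → ¬ caus a a)
    (htrans : ∀ a b c, a ≠ bot → b ≠ bot → c ≠ bot → caus a b → caus b c → caus a c)
    (M : Finset S) (hM : ∀ m ∈ M, m ≠ bot)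
    (hcov : ∀ x : S, ∃ m ∈ M, caus x m ∨ caus m x) :
    ¬ ∃ C : CausalSite S, C.caus = caus ∧ C.bot = bot := by
  rintro ⟨C, rfl, rfl⟩
  have key : ∀ l : List S, ∀ m ∈ l, C.incl m (l.foldr C.sup C.bot) := by
    intro l
    induction l with
    | nil => simp
    | cons a l ih =>
      intro m hm
      rcases List.mem_cons.mp hm with h | h
      · subst h; exact C.incl_sup_left _ _
      · exact C.incl_trans _ _ _ (ih m h) (C.incl_sup_right _ _)
  set t := M.toList.foldr C.sup C.bot with ht
  obtain ⟨m, hm, hc⟩ := hcov t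
  have hmt : C.incl m t := key _ m (Finset.mem_toList.mpr hm)
  have : C.caus m m := by
    rcases hc with h | h
    · exact C.ax_i t m m hmt h
    · exact C.ax_ii t m m hmt h
  exact C.caus_irrefl m (hM m hm) this
end

section
/- Let (P, ≤) be any partially ordered set and let P^F denote the family of all finite subsets of P. For K, L ∈ P^F define K ≺ L if and only if k < l for every pair (k, l) ∈ K × L. Then (P^F, ⊆, ≺) is a causal site, with least element the empty set and binary suprema given by unions. -/
/-- For any poset `(P, ≤)`, the family `P^F` of finite subsets of `P`, with set
inclusion as the inclusion relation, `K ≺ L ↔ k < l for all (k, l) ∈ K × L` as the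
causal relation, the empty set as least element and union as binary supremum, is a
causal site. -/
theorem finsets_causalSite {P : Type*} [PartialOrder P] [DecidableEq P] :
    ∃ C : CausalSite (Finset P),
      C.incl = (fun K L => K ⊆ L) ∧
      C.caus = (fun K L => ∀ k ∈ K, ∀ l ∈ L, k < l) ∧
      C.bot = ∅ ∧
      C.sup = (fun K L => K ∪ L) := by

  classical
  refine ⟨{
    incl := fun K L => K ⊆ L
    caus := fun K L => ∀ k ∈ K, ∀ l ∈ L, k < l
    sup := fun K L => K ∪ L
    bot := ∅
    incl_refl := fun a => le_refl a
    incl_antisymm := fun a b h1 h2 => le_antisymm h1 h2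
    incl_trans := fun a b c h1 h2 => le_trans h1 h2
    bot_incl := fun a => Finset.empty_subset a
    incl_sup_left := fun a b => Finset.subset_union_left
    incl_sup_right := fun a b => Finset.subset_union_right
    sup_incl := fun a b c h1 h2 => Finset.union_subset h1 h2
    caus_irrefl := by
      intro a ha h
      obtain ⟨k, hk⟩ := Finset.nonempty_iff_ne_empty.2 ha
      exact lt_irrefl k (h k hk k hk)
    caus_trans := by
      intro a b c ha hb hc h1 h2 k hk l hl
      obtain ⟨m, hm⟩ := Finset.nonempty_iff_ne_empty.2 hb
      exact lt_trans (h1 k hk m hm) (h2 m hm l hl)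
    ax_i := fun a b c hba h k hk l hl => h k (hba hk) l hl
    ax_ii := fun a b c hba h k hk l hl => h k hk l (hba hl)
    ax_iii := by
      intro a b c h1 h2 k hk l hl
      rcases Finset.mem_union.1 hk with h | h
      · exact h1 k h l hl
      · exact h2 k h l hl
    ax_iv := by
      intro a b
      refine ⟨b.filter (fun x => ∀ l ∈ a, x < l), ?_, Finset.filter_subset _ _, ?_⟩
      · intro k hk l hl
        exact (Finset.mem_filter.1 hk).2 l hl
      · intro c hc hcb k hk
        exact Finset.mem_filter.2 ⟨hcb hk, fun l hl => hc k hk l hl⟩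
  }, rfl, rfl, rfl, rfl⟩
end

section
/- Let (P, π) be a framework. Then the double dual framework (P^{dd}, π^{dd}) is isomorphic to the quotient framework of (P, π) with respect to the equivalence relation x ∼ y ⟺ π(x) = π(y). Moreover, if (P, π) is T0, then (P^{dd}, π^{dd}) is isomorphic to (P, π) itself. -/
/-- A framework on `P` is just a family `π ⊆ 2^P`, the framology. For `x ∈ P`,
`framePoint π x = π(x) = {U ∈ π : x ∈ U}` is the associated abstract point. -/
def framePoint {P : Type*} (π : Set (Set P)) (x : P) : Set (Set P) :=
  {U | U ∈ π ∧ x ∈ U}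

/-- The framology of the dual framework: the places of the dual are the members of `π`,
and its framology is `{π(x) : x ∈ P}`. -/
def dualFramology {P : Type*} (π : Set (Set P)) : Set (Set ↥π) :=
  {V | ∃ x : P, V = {U : ↥π | x ∈ (U : Set P)}}

/-- A framework `(P, π)` is T₀ if distinct places are separated by some member of the
framology. -/
def IsT0Framework {P : Type*} (π : Set (Set P)) : Prop :=
  ∀ x y : P, x ≠ y → ∃ U ∈ π, (x ∈ U ∧ y ∉ U) ∨ (x ∉ U ∧ y ∈ U)

/-- An isomorphism of frameworks: a bijective map sending the framology onto the
framology, whose inverse is also a framework morphism. -/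
def IsFrameworkIso {P Q : Type*} (π : Set (Set P)) (σ : Set (Set Q)) (f : P → Q) : Prop :=
  Function.Bijective f ∧ (∀ U ∈ π, f '' U ∈ σ) ∧ (∀ V ∈ σ, f ⁻¹' V ∈ π)

/-- The equivalence relation `x ∼ y ⟺ π(x) = π(y)` on the places of a framework. -/
def frameSetoid {P : Type*} (π : Set (Set P)) : Setoid P where
  r x y := framePoint π x = framePoint π y
  iseqv := ⟨fun _ => rfl, Eq.symm, Eq.trans⟩

/-- The framology of the quotient framework with respect to `∼`. -/
def quotFramology {P : Type*} (π : Set (Set P)) :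
    Set (Set (Quotient (frameSetoid π))) :=
  {W | ∃ U ∈ π, W = Quotient.mk (frameSetoid π) '' U}

def gmap {P : Type*} (π : Set (Set P)) (x : P) : ↥(dualFramology π) :=
  ⟨{U : ↥π | x ∈ (U : Set P)}, ⟨x, rfl⟩⟩

lemma gmap_eq_iff {P : Type*} (π : Set (Set P)) (x y : P) :
    gmap π x = gmap π y ↔ framePoint π x = framePoint π y := by
  constructor
  · intro h
    ext U
    constructor
    · rintro ⟨hU, hx⟩
      refine ⟨hU, ?_⟩
      have := congrArg Subtype.val h
      have hm : (⟨U, hU⟩ : ↥π) ∈ ({U : ↥π | x ∈ (U : Set P)}) := hx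
      rw [show ({U : ↥π | x ∈ (U : Set P)}) = ({U : ↥π | y ∈ (U : Set P)}) from this] at hm
      exact hm
    · rintro ⟨hU, hy⟩
      refine ⟨hU, ?_⟩
      have := congrArg Subtype.val h
      have hm : (⟨U, hU⟩ : ↥π) ∈ ({U : ↥π | y ∈ (U : Set P)}) := hy
      rw [← show ({U : ↥π | x ∈ (U : Set P)}) = ({U : ↥π | y ∈ (U : Set P)}) from this] at hm
      exact hm
  · intro h
    apply Subtype.ext
    ext U
    constructor
    · intro hx
      exact ((Set.ext_iff.mp h U.1).mp ⟨U.2, hx⟩).2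
    · intro hy
      exact ((Set.ext_iff.mp h U.1).mpr ⟨U.2, hy⟩).2

lemma gmap_image {P : Type*} (π : Set (Set P)) (U : Set P) (hU : U ∈ π) :
    gmap π '' U = {V : ↥(dualFramology π) | (⟨U, hU⟩ : ↥π) ∈ (V : Set ↥π)} := by
  ext V
  constructor
  · rintro ⟨x, hx, rfl⟩
    exact hx
  · intro hV
    obtain ⟨x, hx⟩ := V.2
    have hxU : x ∈ U := by
      have : (⟨U, hU⟩ : ↥π) ∈ (V : Set ↥π) := hV
      rw [hx] at this
      exact this
    exact ⟨x, hxU, Subtype.ext hx.symm⟩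

lemma gmap_surj {P : Type*} (π : Set (Set P)) :
    Function.Surjective (gmap π) := by
  rintro ⟨V, x, rfl⟩
  exact ⟨x, rfl⟩

/-- The double dual framework of `(P, π)` is isomorphic to the quotient framework of
`(P, π)` by the equivalence `x ∼ y ⟺ π(x) = π(y)`; moreover, if `(P, π)` is T₀ then the
double dual is isomorphic to `(P, π)` itself. -/
theorem doubleDual_iso_quotient {P : Type*} (π : Set (Set P)) :
    (∃ f : Quotient (frameSetoid π) → ↥(dualFramology π),
      IsFrameworkIso (quotFramology π) (dualFramology (dualFramology π)) f) ∧
    (IsT0Framework π →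
      ∃ f : P → ↥(dualFramology π),
        IsFrameworkIso π (dualFramology (dualFramology π)) f) := by
  constructor
  · refine ⟨Quotient.lift (gmap π) (fun x y h => (gmap_eq_iff π x y).mpr h), ?_, ?_, ?_⟩
    · constructor
      · intro a b hab
        induction a using Quotient.ind
        induction b using Quotient.ind
        exact Quotient.sound ((gmap_eq_iff π _ _).mp hab)
      · intro V
        obtain ⟨x, hx⟩ := gmap_surj π V
        exact ⟨⟦x⟧, hx⟩
    · rintro W ⟨U, hU, rfl⟩
      refine ⟨⟨U, hU⟩, ?_⟩
      rw [← gmap_image π U hU]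
      rw [← Set.image_comp]
      rfl
    · rintro W ⟨⟨U, hU⟩, rfl⟩
      refine ⟨U, hU, ?_⟩
      ext q
      induction q using Quotient.ind with
      | _ x =>
        constructor
        · intro hq
          exact ⟨x, hq, rfl⟩
        · rintro ⟨y, hy, hxy⟩
          have h : framePoint π y = framePoint π x := Quotient.exact hxy
          have : y ∈ U ↔ x ∈ U := by
            constructor
            · intro h'
              exact ((Set.ext_iff.mp h U).mp ⟨hU, h'⟩).2
            · intro h'
              exact ((Set.ext_iff.mp h U).mpr ⟨hU, h'⟩).2
          exact this.mp hy
  · intro hT0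
    refine ⟨gmap π, ⟨?_, gmap_surj π⟩, ?_, ?_⟩
    · intro x y hxy
      by_contra hne
      obtain ⟨U, hU, h⟩ := hT0 x y hne
      have := (gmap_eq_iff π x y).mp hxy
      have hiff : x ∈ U ↔ y ∈ U := by
        constructor
        · intro h'
          exact ((Set.ext_iff.mp this U).mp ⟨hU, h'⟩).2
        · intro h'
          exact ((Set.ext_iff.mp this U).mpr ⟨hU, h'⟩).2
      rcases h with ⟨h1, h2⟩ | ⟨h1, h2⟩
      · exact h2 (hiff.mp h1)
      · exact h1 (hiff.mpr h2)
    · intro U hU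
      exact ⟨⟨U, hU⟩, (gmap_image π U hU).symm ▸ rfl⟩
    · rintro W ⟨⟨U, hU⟩, rfl⟩
      have : gmap π ⁻¹' {V : ↥(dualFramology π) | (⟨U, hU⟩ : ↥π) ∈ (V : Set ↥π)} = U := rfl
      rw [this]
      exact hU
end

section
/- A framework (P, π) is isomorphic to the dual framework of some framework if and only if (P, π) is T0. -/
universe u

/-- A framework is isomorphic to the dual framework of some framework if and only if
it is T₀. -/
theorem iso_to_dual_iff_t0 {P : Type u} (π : Set (Set P)) :
    (∃ (Q : Type u) (σ : Set (Set Q)) (f : P → ↥σ),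
      IsFrameworkIso π (dualFramology σ) f) ↔ IsT0Framework π := by
  constructor
  · rintro ⟨Q, σ, f, ⟨hinj, _⟩, _, hback⟩ x y hxy
    have hne : (f x : Set Q) ≠ (f y : Set Q) := fun h => hxy (hinj (Subtype.ext h))
    have hq : ∃ q : Q, (q ∈ (f x : Set Q) ∧ q ∉ (f y : Set Q)) ∨
        (q ∉ (f x : Set Q) ∧ q ∈ (f y : Set Q)) := by
      by_contra h
      push_neg at h
      apply hne
      ext q
      have := h q
      tauto
    obtain ⟨q, hq⟩ := hq
    refine ⟨f ⁻¹' {W : ↥σ | q ∈ (W : Set Q)}, hback _ ⟨q, rfl⟩, ?_⟩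
    simpa using hq
  · intro hT0
    refine ⟨↥π, dualFramology π,
      fun x => ⟨{U : ↥π | x ∈ (U : Set P)}, x, rfl⟩, ⟨?_, ?_⟩, ?_, ?_⟩
    · intro x y hxy
      by_contra hne
      obtain ⟨U, hU, h⟩ := hT0 x y hne
      have h2 : {V : ↥π | x ∈ (V : Set P)} = {V : ↥π | y ∈ (V : Set P)} :=
        congrArg Subtype.val hxy
      have hx : (⟨U, hU⟩ : ↥π) ∈ {V : ↥π | x ∈ (V : Set P)} ↔
          (⟨U, hU⟩ : ↥π) ∈ {V : ↥π | y ∈ (V : Set P)} := by rw [h2]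
      simp only [Set.mem_setOf_eq] at hx
      tauto
    · rintro ⟨V, x, rfl⟩
      exact ⟨x, rfl⟩
    · intro U hU
      refine ⟨(⟨U, hU⟩ : ↥π), ?_⟩
      ext W
      simp only [Set.mem_image, Set.mem_setOf_eq]
      constructor
      · rintro ⟨x, hx, rfl⟩
        exact hx
      · intro hW
        obtain ⟨V, hV⟩ := W
        obtain ⟨x, rfl⟩ := hV
        exact ⟨x, hW, rfl⟩
    · rintro V ⟨q, rfl⟩
      have : (fun x => (⟨{U : ↥π | x ∈ (U : Set P)}, ⟨x, rfl⟩⟩ : ↥(dualFramology π))) ⁻¹'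
          {W : ↥(dualFramology π) | q ∈ (W : Set ↥π)} = (q : Set P) := by
        ext x
        simp [Set.mem_preimage]
      rw [this]
      exact q.2
end

section
/- For every framework (P, π), the dual framework (P^d, π^d) is isomorphic to the triple dual framework (P^{ddd}, π^{ddd}). -/
/-- For every framework `(P, π)`, the dual framework is isomorphic to the triple dual
framework. -/
theorem dual_iso_tripleDual {P : Type*} (π : Set (Set P)) :
    ∃ f : ↥π → ↥(dualFramology (dualFramology π)),
      IsFrameworkIso (dualFramology π)
        (dualFramology (dualFramology (dualFramology π))) f := by
  set f : ↥π → ↥(dualFramology (dualFramology π)) :=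
    fun U => ⟨{V : ↥(dualFramology π) | U ∈ (V : Set ↥π)}, ⟨U, rfl⟩⟩ with hf
  have hinj : Function.Injective f := by
    intro U U' h
    have h' : {V : ↥(dualFramology π) | U ∈ (V : Set ↥π)}
        = {V : ↥(dualFramology π) | U' ∈ (V : Set ↥π)} := congrArg Subtype.val h
    apply Subtype.ext
    ext x
    have := Set.ext_iff.mp h' ⟨{W : ↥π | x ∈ (W : Set P)}, ⟨x, rfl⟩⟩
    simpa using this
  refine ⟨f, ⟨hinj, ?_⟩, ?_, ?_⟩
  · rintro ⟨W, U, rfl⟩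
    exact ⟨U, rfl⟩
  · rintro V ⟨x, rfl⟩
    refine ⟨⟨{U : ↥π | x ∈ (U : Set P)}, ⟨x, rfl⟩⟩, ?_⟩
    ext W
    obtain ⟨Wv, U, rfl⟩ := W
    constructor
    · rintro ⟨U', hU', h⟩
      have hUU : U' = U := hinj (by exact h)
      subst hUU
      exact hU'
    · intro h
      exact ⟨U, h, rfl⟩
  · rintro Z ⟨v, rfl⟩
    obtain ⟨vv, x, rfl⟩ := v
    exact ⟨x, rfl⟩
end

section
/- Let (P, ⊑, ≺) be a causal site, let π be the family of all maximal centered subsets of P (maximal with respect to set inclusion), let X = π, and let τ be the topology on X generated by taking the family {π(x) : x ∈ P}, where π(x) = {U ∈ π : x ∈ U}, as a subbase for the closed sets. Then the topological space (X, τ) is compact and T1. -/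
/-- A subset `F` of a causal site is centered if every finite nonempty collection of its
elements has a common lower bound different from `⊥`. -/
def CausalSite.Centered {S : Type*} (C : CausalSite S) (F : Set S) : Prop :=
  ∀ G : Finset S, ↑G ⊆ F → G.Nonempty →
    ∃ y : S, y ≠ C.bot ∧ ∀ x ∈ G, C.incl y x

/-- A maximal centered subset of a causal site. -/
def CausalSite.MaxCentered {S : Type*} (C : CausalSite S) (F : Set S) : Prop :=
  C.Centered F ∧ ∀ F' : Set S, C.Centered F' → F ⊆ F' → F = F'

/-- The points of the weakly causal topology: the maximal centered subsets of `P`. -/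
def CausalSite.Points {S : Type*} (C : CausalSite S) : Type _ :=
  {F : Set S // C.MaxCentered F}

/-- The weakly causal topology: generated by the family `{π(x) : x ∈ P}`, where
`π(x) = {U maximal centered : x ∈ U}`, as a subbase for the closed sets. -/
def CausalSite.weaklyCausalTopology {S : Type*} (C : CausalSite S) :
    TopologicalSpace C.Points :=
  TopologicalSpace.generateFrom
    {V : Set C.Points | ∃ x : S, V = {U : C.Points | x ∈ U.1}ᶜ}

section Aux
variable {S : Type*} (C : CausalSite S)

lemma CausalSite.centered_sUnion_chain {c : Set (Set S)}
    (hc : IsChain (· ⊆ ·) c) (hne : c.Nonempty)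
    (hcent : ∀ F ∈ c, C.Centered F) : C.Centered (⋃₀ c) := by
  intro G hG hGne
  have : Nonempty c := hne.to_subtype
  have hdir : Directed (· ⊆ ·) (fun i : c => (i : Set S)) :=
    directedOn_iff_directed.1 hc.directedOn
  have hsub : ↑G ⊆ ⋃ i : c, (i : Set S) := by
    rwa [← Set.sUnion_eq_iUnion]
  obtain ⟨i, hi⟩ := hdir.exists_mem_subset_of_finset_subset_biUnion hsub
  exact hcent i i.2 G hi hGne

lemma CausalSite.exists_maxCentered {F : Set S} (hF : C.Centered F) :
    ∃ M : Set S, F ⊆ M ∧ C.MaxCentered M := by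
  obtain ⟨M, hFM, hmax⟩ := zorn_subset_nonempty {F' | C.Centered F'}
    (fun c hcS hc hne => ⟨⋃₀ c, C.centered_sUnion_chain hc hne hcS,
      fun s hs => Set.subset_sUnion_of_mem hs⟩) F hF
  exact ⟨M, hFM, hmax.1, fun F' hF' hMF' => ((hmax.2 hF' hMF').antisymm hMF').symm⟩

end Aux

/-- The weakly causal topology generated by a causal site is compact and T₁. -/
theorem weaklyCausalTopology_compact_t1 {S : Type*} (C : CausalSite S) :
    @CompactSpace C.Points C.weaklyCausalTopology ∧
      @T1Space C.Points C.weaklyCausalTopology := by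
  classical
  constructor
  · -- Compactness via ultrafilters
    letI := C.weaklyCausalTopology
    rw [← isCompact_univ_iff, isCompact_iff_ultrafilter_le_nhds]
    intro f _
    set F : Set S := {x : S | {U : C.Points | x ∈ U.1} ∈ f} with hFdef
    have hFcent : C.Centered F := by
      intro G hG hGne
      have hmem : {U : C.Points | ∀ x ∈ G, x ∈ U.1} ∈ f := by
        have : {U : C.Points | ∀ x ∈ G, x ∈ U.1}
            = ⋂ x ∈ G, {U : C.Points | x ∈ U.1} := by
          ext U; simp
        rw [this]
        exact (Filter.biInter_finset_mem G).2 fun x hx => hG hx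
      obtain ⟨U, hU⟩ := f.nonempty_of_mem hmem
      exact U.2.1 G (fun x hx => hU x hx) hGne
    obtain ⟨M, hFM, hM⟩ := C.exists_maxCentered hFcent
    refine ⟨(⟨M, hM⟩ : {F : Set S // C.MaxCentered F}), trivial, ?_⟩
    rw [show @nhds C.Points C.weaklyCausalTopology ⟨M, hM⟩ = _ from TopologicalSpace.nhds_generateFrom]
    refine le_iInf fun V => le_iInf fun hV => ?_
    obtain ⟨hMV, x, rfl⟩ := hV
    rw [Filter.le_principal_iff]
    have hxM : x ∉ M := hMV
    have hxF : x ∈ F → x ∈ M := fun h => hFM h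
    have : {U : C.Points | x ∈ U.1} ∉ f := fun h => hxM (hxF h)
    simpa using (f.compl_mem_iff_notMem).2 this
  · letI := C.weaklyCausalTopology
    rw [t1Space_iff_exists_open]
    intro U V hUV
    have : ¬ V.1 ⊆ U.1 := fun hsub => hUV (Subtype.ext (V.2.2 U.1 U.2.1 hsub).symm)
    obtain ⟨x, hxV, hxU⟩ := Set.not_subset.1 this
    refine ⟨{W : C.Points | x ∈ W.1}ᶜ, ?_, hxU, by simpa using hxV⟩
    exact TopologicalSpace.GenerateOpen.basic _ ⟨x, rfl⟩
end

section
/- Let (X, τ) be a T1 topological space and let C be the family of all closed subsets of X. Let η be the set of all families of closed sets that are maximal (with respect to set inclusion) among families of members of C having the finite intersection property. For C ∈ C put μ(C) = {U ∈ η : C ∈ U}, and let ϑ be the topology on Y = η generated by taking {μ(C) : C ∈ C} as a subbase for the closed sets. Then (Y, ϑ) is compact, and the map f : X → Y defined by f(x) = {C ∈ C : x ∈ C} is an injective continuous closed map onto its image, i.e. a homeomorphic embedding of (X, τ) into (Y, ϑ). -/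
/-- A family of closed sets has the finite intersection property if every finite
subfamily has nonempty intersection. -/
def FipFamily (X : Type*) [TopologicalSpace X]
    (U : Set {C : Set X // IsClosed C}) : Prop :=
  ∀ G : Finset {C : Set X // IsClosed C}, ↑G ⊆ U →
    (⋂ C ∈ G, (C : Set X)).Nonempty

/-- `η`: the families of closed sets maximal (w.r.t. set inclusion) among the families
of closed sets having the finite intersection property — the ultra-closed filters. -/
def wallmanPoints (X : Type*) [TopologicalSpace X] : Set (Set {C : Set X // IsClosed C}) :=
  {U | FipFamily X U ∧ ∀ V : Set {C : Set X // IsClosed C}, FipFamily X V → U ⊆ V → U = V}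

/-- The Wallman topology `ϑ` on `Y = η`: generated by the family
`{μ(C) : C closed}`, where `μ(C) = {U ∈ η : C ∈ U}`, as a subbase for closed sets. -/
def wallmanTopology (X : Type*) [TopologicalSpace X] :
    TopologicalSpace ↥(wallmanPoints X) :=
  TopologicalSpace.generateFrom
    {W : Set ↥(wallmanPoints X) | ∃ C : {C : Set X // IsClosed C},
      W = {U : ↥(wallmanPoints X) | C ∈ (U : Set {C : Set X // IsClosed C})}ᶜ}

/-- Every f.i.p. family extends to a maximal one. -/
lemma fip_exists_maximal {X : Type*} [TopologicalSpace X]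
    {U : Set {C : Set X // IsClosed C}} (hU : FipFamily X U) :
    ∃ V ∈ wallmanPoints X, U ⊆ V := by
  have H : ∀ c ⊆ {V | FipFamily X V}, IsChain (· ⊆ ·) c → c.Nonempty →
      ∃ ub ∈ {V | FipFamily X V}, ∀ s ∈ c, s ⊆ ub := by
    rintro c hcS hc ⟨c0, hc0⟩
    refine ⟨⋃₀ c, ?_, fun s hs => Set.subset_sUnion_of_mem hs⟩
    intro G hG
    haveI : Nonempty c := ⟨⟨c0, hc0⟩⟩
    have hdir : Directed (· ⊆ ·) (fun i : c => (i : Set {C : Set X // IsClosed C})) := by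
      intro i j
      rcases hc.total i.2 j.2 with h | h
      · exact ⟨j, h, subset_rfl⟩
      · exact ⟨i, subset_rfl, h⟩
    have hsub : ↑G ⊆ ⋃ i : c, (i : Set {C : Set X // IsClosed C}) := by
      rwa [← Set.sUnion_eq_iUnion]
    obtain ⟨i, hi⟩ := hdir.exists_mem_subset_of_finset_subset_biUnion hsub
    exact hcS i.2 G hi
  obtain ⟨m, hUm, hm⟩ := zorn_subset_nonempty {V | FipFamily X V} H U hU
  exact ⟨m, ⟨hm.1, fun W hW hmW => subset_antisymm hmW (hm.2 hW hmW)⟩, hUm⟩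

open Classical in
/-- In a T1 space, the family of closed sets containing `x` is a Wallman point. -/
lemma pointFamily_mem {X : Type*} [TopologicalSpace X] [T1Space X] (x : X) :
    {C : {C : Set X // IsClosed C} | x ∈ (C : Set X)} ∈ wallmanPoints X := by
  constructor
  · intro G hG
    exact ⟨x, Set.mem_iInter₂.2 fun C hC => hG hC⟩
  · intro V hV hUV
    refine subset_antisymm hUV fun C hC => ?_
    by_contra hx
    have hxV : (⟨{x}, isClosed_singleton⟩ : {C : Set X // IsClosed C}) ∈ V :=
      hUV (by simp)
    have := hV {C, ⟨{x}, isClosed_singleton⟩} (by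
      intro D hD
      simp only [Finset.coe_insert, Finset.coe_singleton, Set.mem_insert_iff,
        Set.mem_singleton_iff] at hD
      rcases hD with rfl | rfl
      · exact hC
      · exact hxV)
    obtain ⟨y, hy⟩ := this
    have hyC : y ∈ (C : Set X) := Set.mem_iInter₂.1 hy C (by simp)
    have hyx : y ∈ ({x} : Set X) :=
      Set.mem_iInter₂.1 hy ⟨{x}, isClosed_singleton⟩ (by simp)
    rw [Set.mem_singleton_iff] at hyx
    exact hx (hyx ▸ hyC)

/-- For a T₁ space `(X, τ)`, the space `(Y, ϑ)` of maximal f.i.p. families of closed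
sets with the Wallman topology is compact, and `x ↦ C(x) = {C closed : x ∈ C}` is an
injective continuous closed map onto its image, i.e. a homeomorphic embedding of
`(X, τ)` into `(Y, ϑ)`. -/
theorem wallman_compactification {X : Type*} [TopologicalSpace X] [T1Space X] :
    @CompactSpace ↥(wallmanPoints X) (wallmanTopology X) ∧
    ∃ f : X → ↥(wallmanPoints X),
      (∀ x : X, (f x : Set {C : Set X // IsClosed C}) =
          {C : {C : Set X // IsClosed C} | x ∈ (C : Set X)}) ∧
      Function.Injective f ∧
      @Continuous X ↥(wallmanPoints X) _ (wallmanTopology X) f ∧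
      (∀ D : Set X, IsClosed D →
        ∃ E : Set ↥(wallmanPoints X), @IsClosed _ (wallmanTopology X) E ∧
          f '' D = E ∩ Set.range f) := by
  letI := wallmanTopology X
  set g : Set (Set ↥(wallmanPoints X)) :=
    {W : Set ↥(wallmanPoints X) | ∃ C : {C : Set X // IsClosed C},
      W = {U : ↥(wallmanPoints X) | C ∈ (U : Set {C : Set X // IsClosed C})}ᶜ} with hg
  have htop : wallmanTopology X = TopologicalSpace.generateFrom g := rfl
  constructor
  · -- compactness
    refine ⟨isCompact_iff_ultrafilter_le_nhds.2 fun F _ => ?_⟩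
    set Ustar : Set {C : Set X // IsClosed C} :=
      {C | {U : ↥(wallmanPoints X) | C ∈ (U : Set {C : Set X // IsClosed C})} ∈ F} with hUstar
    have hfip : FipFamily X Ustar := by
      intro G hG
      have hmem : (⋂ C ∈ G, {U : ↥(wallmanPoints X) |
          C ∈ (U : Set {C : Set X // IsClosed C})}) ∈ F :=
        (Filter.biInter_mem G.finite_toSet).2 fun C hC => hG hC
      obtain ⟨V, hV⟩ := F.nonempty_of_mem hmem
      exact V.2.1 G fun C hC => Set.mem_iInter₂.1 hV C hC
    obtain ⟨V, hVmem, hUV⟩ := fip_exists_maximal hfip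
    refine ⟨⟨V, hVmem⟩, Set.mem_univ _, ?_⟩
    show ↑F ≤ @nhds _ (TopologicalSpace.generateFrom g) ⟨V, hVmem⟩
    rw [TopologicalSpace.nhds_generateFrom]
    refine le_iInf₂ fun s hs => Filter.le_principal_iff.2 ?_
    obtain ⟨hys, C, rfl⟩ := hs
    have hCV : C ∉ V := hys
    have hCU : C ∉ Ustar := fun h => hCV (hUV h)
    exact (Ultrafilter.compl_mem_iff_notMem).2 hCU
  · refine ⟨fun x => ⟨{C | x ∈ (C : Set X)}, pointFamily_mem x⟩, fun x => rfl, ?_, ?_, ?_⟩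
    · -- injective
      intro x y hxy
      have h : {C : {C : Set X // IsClosed C} | x ∈ (C : Set X)} =
          {C : {C : Set X // IsClosed C} | y ∈ (C : Set X)} := congrArg Subtype.val hxy
      have hx : (⟨{x}, isClosed_singleton⟩ : {C : Set X // IsClosed C}) ∈
          {C : {C : Set X // IsClosed C} | x ∈ (C : Set X)} := by simp
      rw [h] at hx
      exact (Set.mem_singleton_iff.1 hx).symm
    · -- continuous
      show @Continuous _ _ _ (TopologicalSpace.generateFrom g) _
      rw [continuous_generateFrom_iff]
      rintro s ⟨C, rfl⟩
      have : (fun x => (⟨{C | x ∈ (C : Set X)}, pointFamily_mem x⟩ : ↥(wallmanPoints X)))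
          ⁻¹' {U : ↥(wallmanPoints X) | C ∈ (U : Set {C : Set X // IsClosed C})}ᶜ
          = (C : Set X)ᶜ := by
        ext x
        simp [Set.mem_preimage]
      rw [this]
      exact C.2.isOpen_compl
    · -- closed image
      intro D hD
      refine ⟨{U : ↥(wallmanPoints X) |
          (⟨D, hD⟩ : {C : Set X // IsClosed C}) ∈ (U : Set {C : Set X // IsClosed C})}, ?_, ?_⟩
      · rw [← isOpen_compl_iff]
        show @IsOpen _ (TopologicalSpace.generateFrom g) _
        exact TopologicalSpace.isOpen_generateFrom_of_mem ⟨⟨D, hD⟩, rfl⟩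
      · ext U
        constructor
        · rintro ⟨x, hxD, rfl⟩
          exact ⟨hxD, ⟨x, rfl⟩⟩
        · rintro ⟨hU, x, rfl⟩
          exact ⟨x, hU, rfl⟩
end
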